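/- Let U ⊆ ℂ be open and convex, let 0 < δ < 1/4, let ψ : U → ℂ be holomorphic with |ψ(z) − 1| < δ on U, let g be the principal square root of ψ, and let G be a primitive of g on U. Let a, b ∈ U with [a, b] ⊆ U, and set w = |Re(b − a)|, h = |Im(b − a)|, L = |b − a| (the width, height, and length of the segment with respect to dz²) and w′ = |Re(G(b) − G(a))|, h′ = |Im(G(b) − G(a))|, L′ = |G(b) − G(a)| (the width, height, and length of the ψ-geodesic from a to b with respect to ψ). Then max(|L′ − L|, |w′ − w|, |h′ − h|) ≤ δ·L. -/

import Mathlib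

/-- `g` is the principal square root of `ψ` on `U`: it is holomorphic on `U`, with
`g² = ψ` and `Re g > 0` on `U`. -/
def IsPrincipalSqrtOn (U : Set ℂ) (ψ g : ℂ → ℂ) : Prop :=
  DifferentiableOn ℂ g U ∧ ∀ z ∈ U, g z ^ 2 = ψ z ∧ 0 < (g z).re

/-- Part (v) of Lemma 2.5 of the paper, in the planar model: with `ψ`, `g`, `G` as
before on an open convex `U`, and `a, b ∈ U` with `[a,b] ⊆ U`, the width
`w = |Re(b − a)|`, height `h = |Im(b − a)|`, and length `L = |b − a|` of the segment
with respect to `dz²`, and the corresponding quantities `w′ = |Re(G b − G a)|`,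
`h′ = |Im(G b − G a)|`, `L′ = |G b − G a|` of the `ψ`-geodesic from `a` to `b`,
satisfy `max(|L′ − L|, |w′ − w|, |h′ − h|) ≤ δL`. -/
theorem width_height_length_comparison (U : Set ℂ) (hU : IsOpen U)
    (hconv : Convex ℝ U)
    (δ : ℝ) (hδ0 : 0 < δ) (hδ : δ < 1 / 4) (ψ g G : ℂ → ℂ)
    (hψ : DifferentiableOn ℂ ψ U)
    (hψb : ∀ z ∈ U, ‖ψ z - 1‖ < δ)
    (hg : IsPrincipalSqrtOn U ψ g)
    (hG : ∀ z ∈ U, HasDerivAt G (g z) z)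
    (a b : ℂ) (ha : a ∈ U) (hb : b ∈ U)
    (hseg : segment ℝ a b ⊆ U)
    (w h L w' h' L' : ℝ)
    (hw : w = |(b - a).re|) (hh : h = |(b - a).im|) (hL : L = ‖b - a‖)
    (hw' : w' = |(G b - G a).re|) (hh' : h' = |(G b - G a).im|)
    (hL' : L' = ‖G b - G a‖) :
    max (max |L' - L| |w' - w|) |h' - h| ≤ δ * L := by
  -- Key bound: ‖g z - 1‖ ≤ δ on the segment
  have hgb : ∀ z ∈ segment ℝ a b, ‖g z - 1‖ ≤ δ := by
    intro z hz
    have hzU := hseg hz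
    obtain ⟨hsq, hre⟩ := hg.2 z hzU
    have hψz := hψb z hzU
    have hfac : (g z - 1) * (g z + 1) = ψ z - 1 := by
      rw [← hsq]; ring
    have h1 : (1 : ℝ) ≤ ‖g z + 1‖ := by
      calc (1 : ℝ) ≤ (g z + 1).re := by simp [Complex.add_re]; linarith
        _ ≤ ‖g z + 1‖ := Complex.re_le_norm _
    have habs : ‖g z - 1‖ * ‖g z + 1‖ = ‖ψ z - 1‖ := by
      rw [← norm_mul, hfac]
    have : ‖g z - 1‖ ≤ ‖g z - 1‖ * ‖g z + 1‖ :=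
      le_mul_of_one_le_right (norm_nonneg _) h1
    calc ‖g z - 1‖ = ‖g z - 1‖ := rfl
      _ ≤ ‖ψ z - 1‖ := by rw [← habs]; exact this
      _ ≤ δ := le_of_lt hψz
  -- Mean value inequality for F z = G z - z
  have hF : ∀ z ∈ segment ℝ a b,
      HasDerivWithinAt (fun z => G z - z) (g z - 1) (segment ℝ a b) z := by
    intro z hz
    exact ((hG z (hseg hz)).sub (hasDerivAt_id z)).hasDerivWithinAt
  have hmain : ‖(G b - b) - (G a - a)‖ ≤ δ * ‖b - a‖ :=
    (convex_segment a b).norm_image_sub_le_of_norm_hasDerivWithin_le hF hgb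
      (left_mem_segment ℝ a b) (right_mem_segment ℝ a b)
  have key : ‖(G b - G a) - (b - a)‖ ≤ δ * L := by
    have : (G b - b) - (G a - a) = (G b - G a) - (b - a) := by ring
    rw [this] at hmain
    rw [hL]; exact hmain
  set d : ℂ := (G b - G a) - (b - a) with hd
  have h1 : |L' - L| ≤ δ * L := by
    rw [hL', hL]
    calc |‖G b - G a‖ - ‖b - a‖| ≤ ‖d‖ := by
          simpa [hd] using abs_norm_sub_norm_le (G b - G a) (b - a)
      _ ≤ δ * ‖b - a‖ := by rw [← hL]; exact key
  have h2 : |w' - w| ≤ δ * L := by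
    rw [hw', hw]
    calc |(|(G b - G a).re| - |(b - a).re|)| ≤ |(G b - G a).re - (b - a).re| :=
          abs_abs_sub_abs_le_abs_sub _ _
      _ = |d.re| := by rw [hd]; simp
      _ ≤ ‖d‖ := Complex.abs_re_le_norm d
      _ ≤ δ * L := key
      _ = δ * L := rfl
  have h3 : |h' - h| ≤ δ * L := by
    rw [hh', hh]
    calc |(|(G b - G a).im| - |(b - a).im|)| ≤ |(G b - G a).im - (b - a).im| :=
          abs_abs_sub_abs_le_abs_sub _ _
      _ = |d.im| := by rw [hd]; simp
      _ ≤ ‖d‖ := Complex.abs_im_le_norm d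
      _ ≤ δ * L := key
      _ = δ * L := rfl
  exact max_le (max_le h1 h2) h3
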